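/- Let F be a set functor and Λ a difunctionally functorial F-relator. Then Λ-similarity is sound and complete: for all F-coalgebras and all pairs of states, the states are Λ-similar if and only if they are behaviourally equivalent. -/

import Mathlib

open CategoryTheory Function

universe u

/-- Applicative composition of relations: `relComp s r = s · r`. -/
def relComp {X Y Z : Type u} (s : Y → Z → Prop) (r : X → Y → Prop) : X → Z → Prop :=
  fun x z => ∃ y, r x y ∧ s y z

/-- Converse of a relation. -/
def relConv {X Y : Type u} (r : X → Y → Prop) : Y → X → Prop := fun y x => r x y

/-- Graph relation of a function. -/
def fgraph {X Y : Type u} (f : X → Y) : X → Y → Prop := fun x y => f x = y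

/-- An `F`-relator: a monotone assignment of relations `F X ⇸ F Y` to relations `X ⇸ Y`. -/
structure Relator (F : Type u ⥤ Type u) : Type (u + 1) where
  map : ∀ {X Y : Type u}, (X → Y → Prop) → (F.obj X → F.obj Y → Prop)
  mono : ∀ {X Y : Type u} {r s : X → Y → Prop}, (∀ x y, r x y → s x y) →
    ∀ u v, map r u v → map s u v

/-- `f` is a coalgebra homomorphism from `(X, α)` to `(Y, β)`. -/
def IsCoalgHom (F : Type u ⥤ Type u) {X Y : Type u} (α : X → F.obj X) (β : Y → F.obj Y)
    (f : X → Y) : Prop :=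
  ∀ x, β (f x) = F.map (↾f) (α x)

/-- Behavioural equivalence of states. -/
def BehEq (F : Type u ⥤ Type u) {X Y : Type u} (α : X → F.obj X) (β : Y → F.obj Y)
    (x : X) (y : Y) : Prop :=
  ∃ (Z : Type u) (γ : Z → F.obj Z) (f : X → Z) (g : Y → Z),
    IsCoalgHom F α γ f ∧ IsCoalgHom F β γ g ∧ f x = g y

/-- `r` is a `Λ`-simulation from `(X, α)` to `(Y, β)`: `r ≤ β° · Λr · α`. -/
def IsSimulation {F : Type u ⥤ Type u} (Λ : Relator F) {X Y : Type u}
    (α : X → F.obj X) (β : Y → F.obj Y) (r : X → Y → Prop) : Prop :=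
  ∀ x y, r x y → Λ.map r (α x) (β y)

/-- `x` and `y` are `Λ`-similar: related by some `Λ`-simulation. -/
def LamSimilar {F : Type u ⥤ Type u} (Λ : Relator F) {X Y : Type u}
    (α : X → F.obj X) (β : Y → F.obj Y) (x : X) (y : Y) : Prop :=
  ∃ r, IsSimulation Λ α β r ∧ r x y

/-- An `F`-relator is difunctionally functorial if `Λ(g° · f) = (Fg)° · Ff` for all
functions `f : X → A`, `g : Y → A`. -/
def DifunFunctorial (F : Type u ⥤ Type u) (Λ : Relator F) : Prop :=
  ∀ {X Y A : Type u} (f : X → A) (g : Y → A) (u : F.obj X) (v : F.obj Y),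
    Λ.map (fun x y => f x = g y) u v ↔ F.map (↾f) u = F.map (↾g) v

/-- For a difunctionally functorial `F`-relator `Λ`, `Λ`-similarity
is sound and complete: two states are `Λ`-similar iff they are behaviourally
equivalent. -/
theorem stmt2 (F : Type u ⥤ Type u) (Λ : Relator F) (hdf : DifunFunctorial F Λ)
    {X Y : Type u} (α : X → F.obj X) (β : Y → F.obj Y) (x : X) (y : Y) :
    LamSimilar Λ α β x y ↔ BehEq F α β x y := by
  constructor
  · rintro ⟨r, hsim, hr⟩
    let s : (X ⊕ Y) → (X ⊕ Y) → Prop := fun a b =>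
      ∃ x y, r x y ∧ a = Sum.inl x ∧ b = Sum.inr y
    let Z := Quot s
    let f : X → Z := fun x => Quot.mk s (Sum.inl x)
    let g : Y → Z := fun y => Quot.mk s (Sum.inr y)
    have hfg : ∀ x y, r x y → f x = g y := fun x y h => Quot.sound ⟨x, y, h, rfl, rfl⟩
    have key : ∀ x y, r x y → F.map (↾f) (α x) = F.map (↾g) (β y) := by
      intro a b h
      have h1 := hsim a b h
      have h2 := Λ.mono (r := r) (s := fun x y => f x = g y)
        (fun p q hpq => hfg p q hpq) _ _ h1
      exact (hdf f g (α a) (β b)).mp h2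
    let comb : (X ⊕ Y) → F.obj Z := fun a => match a with
      | Sum.inl x => F.map (↾f) (α x)
      | Sum.inr y => F.map (↾g) (β y)
    have hcomb : ∀ a b, s a b → comb a = comb b := by
      rintro a b ⟨p, q, h, rfl, rfl⟩
      exact key p q h
    refine ⟨Z, Quot.lift comb hcomb, f, g, fun _ => rfl, fun _ => rfl, hfg x y hr⟩
  · rintro ⟨Z, γ, f, g, hf, hg, hxy⟩
    refine ⟨fun x y => f x = g y, ?_, hxy⟩
    intro a b hab
    rw [hdf f g, ← hf a, ← hg b, hab]
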